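/- Let g : ℝⁿ → ℝ be L-Lipschitz continuous (with respect to the Euclidean norm) and let ξ > 0. Then the randomized smoothing ĝ(z) := ∫ g(z + ξν) dμ(ν) is differentiable at every z ∈ ℝⁿ, and its gradient satisfies ∇ĝ(z) = (n/ξ) ∫_{S^{n−1}} (g(z + ξu) − g(z)) u dσ(u). -/

import Mathlib

open MeasureTheory

set_option maxHeartbeats 1000000

open Set Function Metric MeasureTheory intervalIntegral
open scoped ENNReal NNReal

noncomputable section

local notation "dim" => Module.finrank ℝ

namespace RS

variable {V : Type*} [NormedAddCommGroup V] [NormedSpace ℝ V] [CompleteSpace V]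

lemma integral_volumeIoiPow (d : ℕ) (F : ℝ → V) :
    ∫ r : Ioi (0:ℝ), F r.1 ∂(MeasureTheory.Measure.volumeIoiPow d)
      = ∫ r in Ioi (0:ℝ), r ^ d • F r := by
  simp only [MeasureTheory.Measure.volumeIoiPow, ENNReal.ofReal]
  rw [integral_withDensity_eq_integral_smul ((measurable_subtype_coe.pow_const _).real_toNNReal),
      integral_subtype_comap measurableSet_Ioi (fun a => Real.toNNReal (a ^ d) • F a)]
  exact setIntegral_congr_fun measurableSet_Ioi fun x hx => by
    rw [NNReal.smul_def, Real.coe_toNNReal _ (pow_nonneg hx.out.le _)]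

variable {E : Type*} [NormedAddCommGroup E] [NormedSpace ℝ E] [MeasurableSpace E] [BorelSpace E]
  [Nontrivial E] [FiniteDimensional ℝ E] (μ : Measure E) [μ.IsAddHaarMeasure]


lemma integrable_comp_homeo {f : E → V} (hf : Integrable f μ) :
    Integrable (fun p : sphere (0:E) 1 × Ioi (0:ℝ) => f (p.2.1 • p.1.1))
      (μ.toSphere.prod (.volumeIoiPow (dim E - 1))) := by
  have hemb := (Homeomorph.measurableEmbedding (homeomorphUnitSphereProd E))
  rw [← μ.measurePreserving_homeomorphUnitSphereProd.integrable_comp_emb hemb]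
  have heq : ((fun p : sphere (0:E) 1 × Ioi (0:ℝ) => f (p.2.1 • p.1.1)) ∘
      (homeomorphUnitSphereProd E)) = fun x : ({0}ᶜ : Set E) => f x.1 := by
    funext x
    simp only [comp_apply, homeomorphUnitSphereProd_apply_fst_coe,
      homeomorphUnitSphereProd_apply_snd_coe]
    rw [smul_inv_smul₀ (norm_ne_zero_iff.2 x.2)]
  rw [heq]
  have h1 : IntegrableOn f ({0}ᶜ : Set E) μ := hf.integrableOn
  have h2 := (MeasurableEmbedding.subtype_coe (measurableSet_singleton (0:E)).compl)
    |>.integrableOn_iff_comap (f := f) (μ := μ) (s := ({0}ᶜ : Set E))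
    (by rw [Subtype.range_coe])
  rw [h2] at h1
  have h3 : Integrable (f ∘ (Subtype.val : ({0}ᶜ : Set E) → E)) (Measure.comap Subtype.val μ) := by
    simpa [IntegrableOn] using h1
  exact h3

lemma polar_integral {f : E → V} (hf : Integrable f μ) :
    ∫ x, f x ∂μ = ∫ u : sphere (0:E) 1,
      (∫ r in Ioi (0:ℝ), r ^ (dim E - 1) • f (r • (u:E))) ∂μ.toSphere := by
  have calc1 : ∫ x, f x ∂μ = ∫ x : ({0}ᶜ : Set E), f x.1 ∂(μ.comap (↑)) := by
    rw [integral_subtype_comap (measurableSet_singleton _).compl fun x => f x,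
      restrict_compl_singleton]
  have calc2 : ∫ x : ({0}ᶜ : Set E), f x.1 ∂(μ.comap (↑))
      = ∫ p : sphere (0:E) 1 × Ioi (0:ℝ), f (p.2.1 • p.1.1)
          ∂(μ.toSphere.prod (.volumeIoiPow (dim E - 1))) := by
    rw [← μ.measurePreserving_homeomorphUnitSphereProd.integral_comp
      (Homeomorph.measurableEmbedding _) (fun p => f (p.2.1 • p.1.1))]
    refine integral_congr_ae (Filter.Eventually.of_forall fun x => ?_)
    simp only [homeomorphUnitSphereProd_apply_fst_coe, homeomorphUnitSphereProd_apply_snd_coe]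
    rw [smul_inv_smul₀ (norm_ne_zero_iff.2 x.2)]
  rw [calc1, calc2, MeasureTheory.integral_prod _ (integrable_comp_homeo μ hf)]
  refine integral_congr_ae (Filter.Eventually.of_forall fun u => ?_)
  exact integral_volumeIoiPow _ (fun r => f (r • (u:E)))

lemma polar_marginal {f : E → V} (hf : Integrable f μ) :
    Integrable (fun u : sphere (0:E) 1 =>
      ∫ r in Ioi (0:ℝ), r ^ (dim E - 1) • f (r • (u:E))) μ.toSphere := by
  have := (integrable_comp_homeo μ hf).integral_prod_left
  refine this.congr (Filter.Eventually.of_forall fun u => ?_)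
  show _ = ∫ r in Ioi (0:ℝ), r ^ (dim E - 1) • f (r • (u:E))
  exact (integral_volumeIoiPow _ (fun r => f (r • (u:E))))



section SphereZero

variable {E : Type*} [NormedAddCommGroup E] [InnerProductSpace ℝ E] [MeasurableSpace E]
  [BorelSpace E] [Nontrivial E] [FiniteDimensional ℝ E]

lemma integral_id_toSphere :
    (∫ u : sphere (0:E) 1, (u:E) ∂(volume : Measure E).toSphere) = 0 := by
  set f : E → E := (closedBall (0:E) 1).indicator id with hf
  have hfi : Integrable f volume := by
    rw [hf, integrable_indicator_iff measurableSet_closedBall]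
    exact continuous_id.continuousOn.integrableOn_compact (isCompact_closedBall _ _)
  have h0 : ∫ x, f x = (0 : E) := by
    have h1 : ∫ x, f (-x) = ∫ x, f x := by
      exact MeasurePreserving.integral_comp' (f := MeasurableEquiv.neg E)
        (Measure.measurePreserving_neg _) f
    have h2 : ∀ x, f (-x) = - f x := by
      intro x
      simp only [hf, indicator]
      by_cases h : x ∈ closedBall (0:E) 1
      · rw [if_pos h, if_pos (by simpa using h)]; simp
      · rw [if_neg h, if_neg (by simpa using h)]; simp
    simp only [h2, MeasureTheory.integral_neg] at h1
    have h3 : (2:ℝ) • ∫ x, f x = 0 := by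
      rw [two_smul]; nth_rewrite 1 [← h1]; abel
    simpa using (smul_eq_zero.1 h3).resolve_left (by norm_num)
  have hpolar := RS.polar_integral (volume : Measure E) hfi
  rw [h0] at hpolar
  set d := Module.finrank ℝ E with hd
  have hdpos : 0 < d := Module.finrank_pos
  have hinner : ∀ u : sphere (0:E) 1,
      (∫ r in Ioi (0:ℝ), r ^ (d - 1) • f (r • (u:E)))
        = ((d:ℝ)+1)⁻¹ • (u:E) := by
    intro u
    have hnu : ‖(u:E)‖ = 1 := by simpa using mem_sphere_zero_iff_norm.1 u.2
    have hcong : ∀ r ∈ Ioi (0:ℝ), r ^ (d - 1) • f (r • (u:E))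
        = (Ioc (0:ℝ) 1).indicator (fun r => r ^ d • (u:E)) r := by
      intro r hr
      have hr' : (0:ℝ) < r := hr
      have hmem : r • (u:E) ∈ closedBall (0:E) 1 ↔ r ∈ Ioc (0:ℝ) 1 := by
        rw [mem_closedBall_zero_iff, norm_smul, hnu, mul_one,
          Real.norm_eq_abs, abs_of_pos hr']
        exact ⟨fun h => ⟨hr', h⟩, fun h => h.2⟩
      simp only [hf, indicator, id]
      by_cases h : r ∈ Ioc (0:ℝ) 1
      · rw [if_pos (hmem.2 h), if_pos h, smul_smul, ← pow_succ,
          Nat.sub_add_cancel hdpos]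
      · rw [if_neg (fun hh => h (hmem.1 hh)), if_neg h, smul_zero]
    rw [setIntegral_congr_fun measurableSet_Ioi hcong,
      setIntegral_indicator measurableSet_Ioc,
      inter_eq_self_of_subset_right Ioc_subset_Ioi_self,
      _root_.integral_smul_const, ← intervalIntegral.integral_of_le zero_le_one,
      integral_pow]
    norm_num
  rw [integral_congr_ae (Filter.Eventually.of_forall hinner), MeasureTheory.integral_smul] at hpolar
  have hne : ((d:ℝ)+1)⁻¹ ≠ 0 := by positivity
  simpa [hne] using hpolar.symm

end SphereZero


section Rfacts
variable {a ω : ℝ}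

lemma q_nonneg (ha : |a| ≤ ω) (hω : ω ≤ 1/2) (h0 : 0 ≤ ω) : (0:ℝ) ≤ 1 + a^2 - ω^2 := by
  nlinarith [abs_nonneg a, neg_abs_le a, le_abs_self a, sq_abs a]

lemma s_sq (ha : |a| ≤ ω) (hω : ω ≤ 1/2) (h0 : 0 ≤ ω) : (Real.sqrt (1 + a^2 - ω^2))^2 = 1 + a^2 - ω^2 :=
  Real.sq_sqrt (q_nonneg ha hω h0)

lemma s_nonneg : 0 ≤ Real.sqrt (1 + a^2 - ω^2) := Real.sqrt_nonneg _

lemma abs_lt_s (ha : |a| ≤ ω) (hω : ω ≤ 1/2) (h0 : 0 ≤ ω) : |a| < Real.sqrt (1 + a^2 - ω^2) := by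
  have h1 : |a| = Real.sqrt (a^2) := (Real.sqrt_sq_eq_abs a).symm
  rw [h1]
  apply Real.sqrt_lt_sqrt (sq_nonneg a)
  nlinarith [ha, abs_nonneg a]

lemma s_le_one (ha : |a| ≤ ω) (hω : ω ≤ 1/2) (h0 : 0 ≤ ω) : Real.sqrt (1 + a^2 - ω^2) ≤ 1 := by
  have h1 := s_sq ha hω h0
  have h2 : (0:ℝ) ≤ Real.sqrt (1 + a^2 - ω^2) := Real.sqrt_nonneg _
  nlinarith [ha, abs_nonneg a, neg_abs_le a, le_abs_self a, sq_abs a]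

lemma R_pos (ha : |a| ≤ ω) (hω : ω ≤ 1/2) (h0 : 0 ≤ ω) : 0 < a + Real.sqrt (1 + a^2 - ω^2) := by
  have := abs_lt_s ha hω h0
  have := neg_abs_le a
  linarith

lemma R_iff (ha : |a| ≤ ω) (hω : ω ≤ 1/2) (h0 : 0 ≤ ω) {r : ℝ} (hr : 0 < r) :
    r^2 - 2*a*r + ω^2 ≤ 1 ↔ r ≤ a + Real.sqrt (1 + a^2 - ω^2) := by
  set s := Real.sqrt (1 + a^2 - ω^2) with hs
  have h1 : s^2 = 1 + a^2 - ω^2 := s_sq ha hω h0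
  have h2 : 0 ≤ s := Real.sqrt_nonneg _
  have h3 : |a| < s := abs_lt_s ha hω h0
  have h4 := neg_abs_le a
  have h5 := le_abs_self a
  constructor
  · intro h
    nlinarith [sq_nonneg (r - a - s), sq_nonneg (r - a + s)]
  · intro h
    have hl : -s ≤ r - a := by linarith
    have hu : r - a ≤ s := by linarith
    nlinarith

lemma R_sub_one_sub_a (ha : |a| ≤ ω) (hω : ω ≤ 1/2) (h0 : 0 ≤ ω) : |a + Real.sqrt (1 + a^2 - ω^2) - 1 - a| ≤ 2*ω^2 := by
  set s := Real.sqrt (1 + a^2 - ω^2) with hs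
  have h1 : s^2 = 1 + a^2 - ω^2 := s_sq ha hω h0
  have h2 : 0 ≤ s := Real.sqrt_nonneg _
  have h3 : s ≤ 1 := s_le_one ha hω h0
  have : a + s - 1 - a = s - 1 := by ring
  rw [this, abs_of_nonpos (by linarith)]
  nlinarith [ha, abs_nonneg a, neg_abs_le a, le_abs_self a]

lemma R_sub_one (ha : |a| ≤ ω) (hω : ω ≤ 1/2) (h0 : 0 ≤ ω) : |a + Real.sqrt (1 + a^2 - ω^2) - 1| ≤ 2*ω := by
  have h1 := R_sub_one_sub_a ha hω h0
  have h2 := abs_sub_abs_le_abs_sub (a + Real.sqrt (1 + a^2 - ω^2) - 1) a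
  have h3 : |a + Real.sqrt (1 + a^2 - ω^2) - 1 - a| = |(a + Real.sqrt (1 + a^2 - ω^2) - 1) - a| := by
    ring_nf
  calc |a + Real.sqrt (1 + a^2 - ω^2) - 1|
      ≤ |a + Real.sqrt (1 + a^2 - ω^2) - 1 - a| + |a| := by
        have := abs_sub (a + Real.sqrt (1 + a^2 - ω^2) - 1) a
        have h4 := abs_add_le (a + Real.sqrt (1 + a^2 - ω^2) - 1 - a) a
        calc |a + Real.sqrt (1 + a^2 - ω^2) - 1|
            = |(a + Real.sqrt (1 + a^2 - ω^2) - 1 - a) + a| := by ring_nf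
          _ ≤ _ := h4
    _ ≤ 2*ω^2 + ω := by linarith
    _ ≤ 2*ω := by nlinarith

end Rfacts

lemma abs_pow_sub_one_le (m : ℕ) {r : ℝ} (h0 : 0 ≤ r) (h2 : r ≤ 2) :
    |r^m - 1| ≤ m * 2^m * |r - 1| := by
  induction m with
  | zero => simp
  | succ m ih =>
    have hrm : |r^m| ≤ 2^m := by
      rw [abs_pow, abs_of_nonneg h0]; exact pow_le_pow_left₀ h0 h2 m
    have key : r^(m+1) - 1 = r^m * (r - 1) + (r^m - 1) := by ring
    calc |r^(m+1) - 1| = |r^m * (r - 1) + (r^m - 1)| := by rw [key]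
      _ ≤ |r^m * (r-1)| + |r^m - 1| := abs_add_le _ _
      _ = |r^m| * |r-1| + |r^m - 1| := by rw [abs_mul]
      _ ≤ 2^m * |r-1| + m * 2^m * |r-1| := by
          have := abs_nonneg (r-1)
          gcongr
      _ = ((m:ℝ)+1) * 2^m * |r-1| := by ring
      _ ≤ ((m:ℝ)+1) * 2^(m+1) * |r-1| := by
          have hle : (2:ℝ)^m ≤ 2^(m+1) := by
            have h3 : (2:ℝ)^(m+1) = 2*2^m := by ring
            nlinarith [pow_pos (by norm_num : (0:ℝ) < 2) m]
          have hm : (0:ℝ) ≤ (m:ℝ)+1 := by positivity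
          have h1 : (0:ℝ) ≤ |r-1| := abs_nonneg _
          gcongr
      _ = ↑(m+1) * 2^(m+1) * |r-1| := by push_cast; ring
  


section Core

open RealInnerProductSpace

variable {E : Type*} [NormedAddCommGroup E] [InnerProductSpace ℝ E] [MeasurableSpace E]
  [BorelSpace E] [Nontrivial E] [FiniteDimensional ℝ E] (μ : Measure E) [μ.IsAddHaarMeasure]

lemma hasGradientAt_ballAvg (h : E → ℝ) {K : ℝ} (hK : 0 ≤ K)
    (hh : ∀ a b, |h a - h b| ≤ K * ‖a - b‖) :
    HasGradientAt (fun w => ∫ ν in closedBall (0:E) 1, h (ν + w) ∂μ)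
      (∫ u : sphere (0:E) 1, h (u:E) • (u:E) ∂μ.toSphere) 0 := by
  set d := Module.finrank ℝ E with hdd
  have hd1 : 1 ≤ d := Module.finrank_pos
  have hcont : Continuous h := by
    have hlip : LipschitzWith (Real.toNNReal K) h := by
      apply LipschitzWith.of_dist_le_mul
      intro a b
      rw [Real.dist_eq, Real.coe_toNNReal _ hK, dist_eq_norm]
      exact hh a b
    exact hlip.continuous
  set M : ℝ := |h 0| + 2*K with hMdef
  have hM0 : 0 ≤ M := by positivity
  have hM : ∀ x : E, ‖x‖ ≤ 2 → |h x| ≤ M := by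
    intro x hx
    have h1 : |h x - h 0| ≤ K * ‖x - 0‖ := hh x 0
    rw [sub_zero] at h1
    have : |h x| ≤ |h 0| + |h x - h 0| := by
      calc |h x| = |h 0 + (h x - h 0)| := by ring_nf
        _ ≤ |h 0| + |h x - h 0| := abs_add_le _ _
    nlinarith
  -- Step 1: rewrite as integral of indicator
  have hΦ : ∀ w : E, (∫ ν in closedBall (0:E) 1, h (ν + w) ∂μ)
      = ∫ x, (closedBall w 1).indicator h x ∂μ := by
    intro w
    have hpre : ((· + w) ⁻¹' closedBall w 1) = closedBall (0:E) 1 := by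
      ext x
      simp [Metric.mem_closedBall, dist_eq_norm]
    have hmp := (measurePreserving_add_right μ w).setIntegral_preimage_emb
      (measurableEmbedding_addRight w) h (closedBall w 1)
    rw [hpre] at hmp
    rw [MeasureTheory.integral_indicator measurableSet_closedBall, ← hmp]
  have hInd : ∀ w : E, Integrable ((closedBall w 1).indicator h) μ := by
    intro w
    rw [integrable_indicator_iff measurableSet_closedBall]
    exact hcont.continuousOn.integrableOn_compact (isCompact_closedBall _ _)
  set J : sphere (0:E) 1 → E → ℝ := fun u w =>
    ∫ r in Ioi (0:ℝ), r ^ (d-1) • (closedBall w 1).indicator h (r • (u:E)) with hJdef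
  have hpolar : ∀ w : E, (∫ x, (closedBall w 1).indicator h x ∂μ)
      = ∫ u : sphere (0:E) 1, J u w ∂μ.toSphere := fun w => polar_integral μ (hInd w)
  have hmarg : ∀ w : E, Integrable (fun u => J u w) μ.toSphere :=
    fun w => polar_marginal μ (hInd w)
  -- Step 2: identify J with an interval integral
  have hkey : ∀ (w : E), ‖w‖ ≤ 1/2 → ∀ u : sphere (0:E) 1,
      J u w = ∫ r in (0:ℝ)..(⟪(u:E),w⟫ + Real.sqrt (1 + ⟪(u:E),w⟫^2 - ‖w‖^2)),
        r ^ (d-1) * h (r • (u:E)) := by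
    intro w hw u
    have hnu : ‖(u:E)‖ = 1 := by simpa using mem_sphere_zero_iff_norm.1 u.2
    have ha : |⟪(u:E),w⟫| ≤ ‖w‖ := by
      have := abs_real_inner_le_norm (u:E) w
      rwa [hnu, one_mul] at this
    set a : ℝ := ⟪(u:E),w⟫ with hadef
    set R : ℝ := a + Real.sqrt (1 + a^2 - ‖w‖^2) with hRdef
    have hR0 : 0 < R := R_pos ha hw (norm_nonneg w)
    have hcongr : ∀ r ∈ Ioi (0:ℝ), r ^ (d-1) • (closedBall w 1).indicator h (r • (u:E))
        = (Ioc (0:ℝ) R).indicator (fun r => r ^ (d-1) * h (r • (u:E))) r := by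
      intro r hr
      have hr' : (0:ℝ) < r := hr
      have hmem : r • (u:E) ∈ closedBall w 1 ↔ r ≤ R := by
        rw [Metric.mem_closedBall, dist_eq_norm, ← R_iff ha hw (norm_nonneg w) hr']
        have hsq : ‖r • (u:E) - w‖^2 = r^2 - 2*a*r + ‖w‖^2 := by
          rw [norm_sub_sq_real, norm_smul, hnu, real_inner_smul_left]
          rw [Real.norm_eq_abs, abs_of_pos hr']
          ring
        constructor
        · intro hle
          nlinarith [norm_nonneg (r • (u:E) - w)]
        · intro hle
          nlinarith [norm_nonneg (r • (u:E) - w), sq_abs ‖r • (u:E) - w‖]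
      simp only [indicator]
      by_cases hc : r ∈ Ioc (0:ℝ) R
      · rw [if_pos (hmem.2 hc.2), if_pos hc, smul_eq_mul]
      · have : r • (u:E) ∉ closedBall w 1 := fun hcc => hc ⟨hr', hmem.1 hcc⟩
        rw [if_neg this, if_neg hc, smul_zero]
    rw [hJdef]
    simp only
    rw [setIntegral_congr_fun measurableSet_Ioi hcongr,
      setIntegral_indicator measurableSet_Ioc,
      inter_eq_self_of_subset_right Ioc_subset_Ioi_self,
      ← intervalIntegral.integral_of_le hR0.le]
  -- Step 3: main estimate
  set C : ℝ := 2^d*(K + M*d)*4 + 2*M with hCdef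
  have hC0 : 0 ≤ C := by positivity
  have hest : ∀ (w : E), ‖w‖ ≤ 1/2 → ∀ u : sphere (0:E) 1,
      |J u w - J u 0 - h (u:E) * ⟪(u:E),w⟫| ≤ C * ‖w‖^2 := by
    intro w hw u
    have hnu : ‖(u:E)‖ = 1 := by simpa using mem_sphere_zero_iff_norm.1 u.2
    have hMu : |h (u:E)| ≤ M := hM _ (by rw [hnu]; norm_num)
    have ha : |⟪(u:E),w⟫| ≤ ‖w‖ := by
      have := abs_real_inner_le_norm (u:E) w
      rwa [hnu, one_mul] at this
    set a : ℝ := ⟪(u:E),w⟫ with hadef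
    set R : ℝ := a + Real.sqrt (1 + a^2 - ‖w‖^2) with hRdef
    have hR0 : 0 < R := R_pos ha hw (norm_nonneg w)
    have hR1 : |R - 1| ≤ 2*‖w‖ := R_sub_one ha hw (norm_nonneg w)
    have hR2 : |R - 1 - a| ≤ 2*‖w‖^2 := R_sub_one_sub_a ha hw (norm_nonneg w)
    have hJw : J u w = ∫ r in (0:ℝ)..R, r ^ (d-1) * h (r • (u:E)) := hkey w hw u
    have hJ0 : J u 0 = ∫ r in (0:ℝ)..(1:ℝ), r ^ (d-1) * h (r • (u:E)) := by
      have := hkey 0 (by norm_num) u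
      simpa using this
    set φ : ℝ → ℝ := fun r => r ^ (d-1) * h (r • (u:E)) with hφdef
    have hφcont : Continuous φ :=
      (continuous_pow _).mul (hcont.comp (continuous_id.smul continuous_const))
    have hsub : J u w - J u 0 = ∫ r in (1:ℝ)..R, φ r := by
      rw [hJw, hJ0]
      exact intervalIntegral.integral_interval_sub_left
        (hφcont.intervalIntegrable _ _) (hφcont.intervalIntegrable _ _)
    have heq2 : (∫ r in (1:ℝ)..R, (φ r - h (u:E)))
        = (∫ r in (1:ℝ)..R, φ r) - (R - 1) * h (u:E) := by
      rw [intervalIntegral.integral_sub (hφcont.intervalIntegrable _ _)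
        (intervalIntegrable_const), intervalIntegral.integral_const, smul_eq_mul]
    have hbound1 : ∀ r ∈ Set.uIoc (1:ℝ) R, ‖φ r - h (u:E)‖ ≤ 2^d*(K + M*d)*(2*‖w‖) := by
      intro r hr
      have hr1 : |r - 1| ≤ |R - 1| := by
        rcases Set.mem_uIoc.1 hr with ⟨c1,c2⟩|⟨c1,c2⟩
        · rw [abs_of_nonneg (by linarith)]
          have := le_abs_self (R-1); linarith
        · rw [abs_of_nonpos (by linarith)]
          have := neg_abs_le (R-1); linarith
      have hrw : |r - 1| ≤ 2*‖w‖ := hr1.trans hR1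
      have hr0 : 0 ≤ r := by
        have := abs_le.1 hrw
        have hwn : ‖w‖ ≤ 1/2 := hw
        linarith [this.1]
      have hr2 : r ≤ 2 := by
        have := abs_le.1 hrw
        linarith [this.2]
      have hhr : |h (r • (u:E)) - h (u:E)| ≤ K * |r - 1| := by
        have := hh (r • (u:E)) (u:E)
        have hns : ‖r • (u:E) - (u:E)‖ = |r - 1| := by
          have : r • (u:E) - (u:E) = (r - 1) • (u:E) := by
            rw [sub_smul, one_smul]
          rw [this, norm_smul, hnu, mul_one, Real.norm_eq_abs]
        rwa [hns] at this
      have hpw : |r^(d-1)| ≤ 2^d := by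
        rw [abs_pow, abs_of_nonneg hr0]
        calc r^(d-1) ≤ 2^(d-1) := pow_le_pow_left₀ hr0 hr2 _
          _ ≤ 2^d := pow_le_pow_right₀ (by norm_num) (Nat.sub_le d 1)
      have hpw1 : |r^(d-1) - 1| ≤ d * 2^d * |r - 1| := by
        have e0 := abs_pow_sub_one_le (d-1) hr0 hr2
        have e1 : ((d-1:ℕ):ℝ) ≤ (d:ℝ) := by exact_mod_cast Nat.sub_le d 1
        have e2 : (2:ℝ)^(d-1) ≤ (2:ℝ)^d := pow_le_pow_right₀ (by norm_num) (Nat.sub_le d 1)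
        have e4 : (0:ℝ) ≤ |r-1| := abs_nonneg _
        have e5 : (0:ℝ) ≤ (2:ℝ)^(d-1) := by positivity
        calc |r^(d-1) - 1| ≤ ((d-1:ℕ):ℝ) * 2^(d-1) * |r-1| := e0
          _ ≤ (d:ℝ) * 2^d * |r-1| :=
            mul_le_mul_of_nonneg_right (mul_le_mul e1 e2 e5 (Nat.cast_nonneg d)) e4
      have hdecomp : φ r - h (u:E)
          = r^(d-1) * (h (r • (u:E)) - h (u:E)) + (r^(d-1) - 1) * h (u:E) := by
        rw [hφdef]; ring
      rw [Real.norm_eq_abs, hdecomp]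
      calc |r^(d-1) * (h (r • (u:E)) - h (u:E)) + (r^(d-1) - 1) * h (u:E)|
          ≤ |r^(d-1)| * |h (r • (u:E)) - h (u:E)| + |r^(d-1) - 1| * |h (u:E)| := by
            refine (abs_add_le _ _).trans ?_
            rw [abs_mul, abs_mul]
        _ ≤ 2^d * (K * |r-1|) + (d * 2^d * |r-1|) * M := by
            have t1 : |r^(d-1)| * |h (r • (u:E)) - h (u:E)| ≤ 2^d * (K * |r-1|) := by
              exact mul_le_mul hpw hhr (abs_nonneg _) (by positivity)
            have t2 : |r^(d-1) - 1| * |h (u:E)| ≤ (d * 2^d * |r-1|) * M :=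
              mul_le_mul hpw1 hMu (abs_nonneg _) (by positivity)
            linarith
        _ = 2^d*(K*|r-1| + M*(d:ℝ)*|r-1|) := by ring
        _ ≤ 2^d*(K*(2*‖w‖) + M*(d:ℝ)*(2*‖w‖)) := by
            have e5 : (0:ℝ) ≤ (2:ℝ)^d := by positivity
            have e8 : K*|r-1| ≤ K*(2*‖w‖) := mul_le_mul_of_nonneg_left hrw hK
            have e9 : M*(d:ℝ)*|r-1| ≤ M*(d:ℝ)*(2*‖w‖) :=
              mul_le_mul_of_nonneg_left hrw (by positivity)
            exact mul_le_mul_of_nonneg_left (by linarith) e5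
        _ = 2^d*(K + M*d)*(2*‖w‖) := by ring
    have hbig : |(∫ r in (1:ℝ)..R, φ r) - (R - 1) * h (u:E)|
        ≤ 2^d*(K + M*d)*(2*‖w‖) * |R - 1| := by
      rw [← heq2]
      have := intervalIntegral.norm_integral_le_of_norm_le_const hbound1
      rwa [Real.norm_eq_abs] at this
    have hfinal : J u w - J u 0 - h (u:E) * a
        = ((∫ r in (1:ℝ)..R, φ r) - (R - 1) * h (u:E)) + (R - 1 - a) * h (u:E) := by
      rw [hsub]; ring
    rw [hfinal]
    calc |((∫ r in (1:ℝ)..R, φ r) - (R - 1) * h (u:E)) + (R - 1 - a) * h (u:E)|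
        ≤ |(∫ r in (1:ℝ)..R, φ r) - (R - 1) * h (u:E)| + |R - 1 - a| * |h (u:E)| := by
          refine (abs_add_le _ _).trans ?_
          rw [abs_mul]
      _ ≤ 2^d*(K + M*d)*(2*‖w‖) * (2*‖w‖) + (2*‖w‖^2) * M := by
          have b1 : |(∫ r in (1:ℝ)..R, φ r) - (R - 1) * h (u:E)|
              ≤ 2^d*(K + M*(d:ℝ))*(2*‖w‖) * (2*‖w‖) :=
            hbig.trans (mul_le_mul_of_nonneg_left hR1 (by positivity))
          have b2 : |R - 1 - a| * |h (u:E)| ≤ (2*‖w‖^2) * M :=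
            mul_le_mul hR2 hMu (abs_nonneg _) (by positivity)
          linarith
      _ = C * ‖w‖^2 := by rw [hCdef]; ring
  -- Step 4: gradient vector and its pairing
  set G : E := ∫ u : sphere (0:E) 1, h (u:E) • (u:E) ∂μ.toSphere with hGdef
  have hIntG : Integrable (fun u : sphere (0:E) 1 => h (u:E) • (u:E)) μ.toSphere := by
    refine (integrable_const M).mono' ?_ ?_
    · exact ((hcont.comp continuous_subtype_val).smul continuous_subtype_val).aestronglyMeasurable
    · refine Filter.Eventually.of_forall fun u => ?_
      have hnu : ‖(u:E)‖ = 1 := by simpa using mem_sphere_zero_iff_norm.1 u.2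
      rw [norm_smul, hnu, mul_one, Real.norm_eq_abs]
      exact hM _ (by rw [hnu]; norm_num)
  have hGw : ∀ w : E, ⟪G, w⟫ = ∫ u : sphere (0:E) 1, h (u:E) * ⟪(u:E), w⟫ ∂μ.toSphere := by
    intro w
    rw [real_inner_comm, ← integral_inner hIntG]
    refine integral_congr_ae (Filter.Eventually.of_forall fun u => ?_)
    show ⟪w, h (u:E) • (u:E)⟫ = h (u:E) * ⟪(u:E), w⟫
    rw [real_inner_smul_right, real_inner_comm]
  have hIntP : ∀ w : E, Integrable (fun u : sphere (0:E) 1 => h (u:E) * ⟪(u:E), w⟫)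
      μ.toSphere := by
    intro w
    refine (integrable_const (M * ‖w‖)).mono' ?_ ?_
    · exact ((hcont.comp continuous_subtype_val).mul
        (continuous_subtype_val.inner continuous_const)).aestronglyMeasurable
    · refine Filter.Eventually.of_forall fun u => ?_
      have hnu : ‖(u:E)‖ = 1 := by simpa using mem_sphere_zero_iff_norm.1 u.2
      rw [Real.norm_eq_abs, abs_mul]
      have h1 : |h (u:E)| ≤ M := hM _ (by rw [hnu]; norm_num)
      have h2 : |⟪(u:E), w⟫| ≤ ‖w‖ := by
        have := abs_real_inner_le_norm (u:E) w
        rwa [hnu, one_mul] at this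
      exact mul_le_mul h1 h2 (abs_nonneg _) hM0
  -- Step 5: the big-O bound
  set T : ℝ := (μ.toSphere Set.univ).toReal with hTdef
  have hbigO : ∀ w : E, ‖w‖ ≤ 1/2 →
      ‖(∫ ν in closedBall (0:E) 1, h (ν + w) ∂μ)
        - (∫ ν in closedBall (0:E) 1, h (ν + 0) ∂μ) - ⟪G, w⟫‖ ≤ C * T * ‖w‖^2 := by
    intro w hw
    rw [hΦ, hΦ, hpolar, hpolar, hGw]
    have hsub3 : Integrable (fun u => J u w - J u 0) μ.toSphere := (hmarg w).sub (hmarg 0)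
    rw [← MeasureTheory.integral_sub (hmarg w) (hmarg 0),
        ← MeasureTheory.integral_sub hsub3 (hIntP w)]
    have := MeasureTheory.norm_integral_le_of_norm_le_const
      (μ := μ.toSphere) (C := C * ‖w‖^2)
      (Filter.Eventually.of_forall fun u => by
        rw [Real.norm_eq_abs]; exact hest w hw u)
    calc ‖∫ u : sphere (0:E) 1, (J u w - J u 0 - h (u:E) * ⟪(u:E), w⟫) ∂μ.toSphere‖
        ≤ C * ‖w‖^2 * T := this
      _ = C * T * ‖w‖^2 := by ring
  -- Step 6: conclude
  rw [hasGradientAt_iff_hasFDerivAt]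
  rw [hasFDerivAt_iff_isLittleO_nhds_zero]
  have hO : (fun w : E => (∫ ν in closedBall (0:E) 1, h (ν + (0 + w)) ∂μ)
      - (∫ ν in closedBall (0:E) 1, h (ν + 0) ∂μ)
      - (InnerProductSpace.toDual ℝ E) G w) =O[nhds 0] (fun w : E => ‖w‖^2) := by
    refine Asymptotics.IsBigO.of_bound (C * T) ?_
    have hball : Metric.closedBall (0:E) (1/2) ∈ nhds (0:E) :=
      Metric.closedBall_mem_nhds 0 (by norm_num)
    filter_upwards [hball] with w hw
    have hw' : ‖w‖ ≤ 1/2 := by simpa [Metric.mem_closedBall, dist_eq_norm] using hw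
    have := hbigO w hw'
    rw [zero_add]
    rw [InnerProductSpace.toDual_apply_apply]
    calc ‖(∫ ν in closedBall (0:E) 1, h (ν + w) ∂μ)
          - (∫ ν in closedBall (0:E) 1, h (ν + 0) ∂μ) - ⟪G, w⟫‖
        ≤ C * T * ‖w‖^2 := this
      _ = C * T * ‖(‖w‖^2)‖ := by rw [Real.norm_eq_abs, abs_of_nonneg (by positivity)]
  have hlo : (fun w : E => ‖w‖^2) =o[nhds 0] (fun w : E => w) := by
    rw [Asymptotics.isLittleO_iff]
    intro c hc
    have hball : Metric.closedBall (0:E) c ∈ nhds (0:E) := Metric.closedBall_mem_nhds 0 hc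
    filter_upwards [hball] with w hw
    have hw' : ‖w‖ ≤ c := by simpa [Metric.mem_closedBall, dist_eq_norm] using hw
    rw [Real.norm_eq_abs, abs_of_nonneg (by positivity), pow_two]
    exact mul_le_mul_of_nonneg_right hw' (norm_nonneg w)
  exact hO.trans_isLittleO hlo

end Core

end RS

/-- The uniform probability measure on the closed unit ball of `ℝⁿ`. -/
noncomputable def ballUniform (n : ℕ) : Measure (EuclideanSpace ℝ (Fin n)) :=
  (volume (Metric.closedBall (0 : EuclideanSpace ℝ (Fin n)) 1))⁻¹ •
    volume.restrict (Metric.closedBall (0 : EuclideanSpace ℝ (Fin n)) 1)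

/-- The uniform probability measure on the unit sphere `S^{n-1} ⊆ ℝⁿ`. -/
noncomputable def sphereUniform (n : ℕ) :
    Measure (Metric.sphere (0 : EuclideanSpace ℝ (Fin n)) 1) :=
  ((volume : Measure (EuclideanSpace ℝ (Fin n))).toSphere Set.univ)⁻¹ •
    (volume : Measure (EuclideanSpace ℝ (Fin n))).toSphere

/-- If `g : ℝⁿ → ℝ` is `L`-Lipschitz and `ξ > 0`, then the randomized smoothing
`ĝ(z) = ∫ g(z + ξν) dμ(ν)` (μ uniform on the unit ball) is differentiable everywhere and
`∇ĝ(z) = (n/ξ) ∫_{S^{n−1}} (g(z + ξu) − g(z)) u dσ(u)` (σ uniform on the unit sphere). -/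
theorem gradient_randomized_smoothing (n : ℕ)
    (g : EuclideanSpace ℝ (Fin n) → ℝ) (L : ℝ) (hL : 0 ≤ L)
    (hg : ∀ a b, |g a - g b| ≤ L * ‖a - b‖)
    (ξ : ℝ) (hξ : 0 < ξ) :
    (∀ z, DifferentiableAt ℝ (fun z' => ∫ ν, g (z' + ξ • ν) ∂(ballUniform n)) z) ∧
    (∀ z, gradient (fun z' => ∫ ν, g (z' + ξ • ν) ∂(ballUniform n)) z =
      ((n : ℝ) / ξ) •
        ∫ u, (g (z + ξ • (u : EuclideanSpace ℝ (Fin n))) - g z) •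
          (u : EuclideanSpace ℝ (Fin n)) ∂(sphereUniform n)) := by
  rcases Nat.eq_zero_or_pos n with hn | hn
  · subst hn
    haveI : Subsingleton (EuclideanSpace ℝ (Fin 0)) := ⟨fun a b => by ext i; exact i.elim0⟩
    have hconst : ∀ z : EuclideanSpace ℝ (Fin 0),
        (fun z' => ∫ ν, g (z' + ξ • ν) ∂(ballUniform 0))
          = fun _ => ∫ ν, g (z + ξ • ν) ∂(ballUniform 0) := by
      intro z
      funext z'
      rw [Subsingleton.elim z' z]
    constructor
    · intro z
      rw [hconst z]
      exact differentiableAt_const _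
    · intro z
      rw [hconst z, gradient_fun_const]
      norm_num
  · -- main case
    haveI hNT : Nontrivial (EuclideanSpace ℝ (Fin n)) :=
      Module.nontrivial_of_finrank_pos (R := ℝ)
        (by rw [finrank_euclideanSpace_fin]; exact hn)
    have hdim : Module.finrank ℝ (EuclideanSpace ℝ (Fin n)) = n := finrank_euclideanSpace_fin
    set τ := (volume : Measure (EuclideanSpace ℝ (Fin n))).toSphere with hτ
    set vbR := (volume (Metric.ball (0:EuclideanSpace ℝ (Fin n)) 1)).toReal with hvbR
    have hvb_pos : 0 < vbR :=
      ENNReal.toReal_pos (measure_ball_pos volume 0 one_pos).ne' measure_ball_lt_top.ne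
    have hcb : volume (Metric.closedBall (0:EuclideanSpace ℝ (Fin n)) 1)
        = volume (Metric.ball (0:EuclideanSpace ℝ (Fin n)) 1) :=
      Measure.addHaar_closedBall_eq_addHaar_ball _ _ _
    have main : ∀ z : EuclideanSpace ℝ (Fin n),
        HasGradientAt (fun z' => ∫ ν, g (z' + ξ • ν) ∂(ballUniform n))
          ((vbR⁻¹ * ξ⁻¹) • (∫ u : Metric.sphere (0:EuclideanSpace ℝ (Fin n)) 1,
            g (z + ξ • (u:EuclideanSpace ℝ (Fin n))) • (u:EuclideanSpace ℝ (Fin n)) ∂τ)) z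
        ∧ ((n : ℝ) / ξ) • (∫ u, (g (z + ξ • (u : EuclideanSpace ℝ (Fin n))) - g z) •
              (u : EuclideanSpace ℝ (Fin n)) ∂(sphereUniform n))
          = (vbR⁻¹ * ξ⁻¹) • (∫ u : Metric.sphere (0:EuclideanSpace ℝ (Fin n)) 1,
            g (z + ξ • (u:EuclideanSpace ℝ (Fin n))) • (u:EuclideanSpace ℝ (Fin n)) ∂τ) := by
      intro z
      set h : EuclideanSpace ℝ (Fin n) → ℝ := fun x => g (z + ξ • x) with hhdef
      have hh : ∀ a b, |h a - h b| ≤ (L*ξ) * ‖a - b‖ := by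
        intro a b
        have h1 := hg (z + ξ • a) (z + ξ • b)
        have he : (z + ξ • a) - (z + ξ • b) = ξ • (a - b) := by
          rw [smul_sub]; abel
        rw [he, norm_smul, Real.norm_eq_abs, abs_of_pos hξ] at h1
        calc |h a - h b| = |g (z + ξ • a) - g (z + ξ • b)| := rfl
          _ ≤ L * (ξ * ‖a - b‖) := h1
          _ = (L*ξ) * ‖a - b‖ := by ring
      have hgr := RS.hasGradientAt_ballAvg (volume : Measure (EuclideanSpace ℝ (Fin n))) h
        (mul_nonneg hL hξ.le) hh
      set G : EuclideanSpace ℝ (Fin n) :=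
        ∫ u : Metric.sphere (0:EuclideanSpace ℝ (Fin n)) 1,
          h (u:EuclideanSpace ℝ (Fin n)) • (u:EuclideanSpace ℝ (Fin n)) ∂τ with hGdef
      have hF : (fun z' => ∫ ν, g (z' + ξ • ν) ∂(ballUniform n))
          = fun z' => vbR⁻¹ • (∫ ν in Metric.closedBall (0:EuclideanSpace ℝ (Fin n)) 1,
              h (ν + ξ⁻¹ • (z' - z)) ∂volume) := by
        funext z'
        rw [ballUniform, MeasureTheory.integral_smul_measure, hcb, ENNReal.toReal_inv, ← hvbR]
        congr 1
        refine setIntegral_congr_fun measurableSet_closedBall fun ν _ => ?_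
        show g (z' + ξ • ν) = g (z + ξ • (ν + ξ⁻¹ • (z' - z)))
        congr 1
        rw [smul_add, smul_smul, mul_inv_cancel₀ hξ.ne', one_smul]
        abel
      have hlin : HasFDerivAt (fun z' : EuclideanSpace ℝ (Fin n) => ξ⁻¹ • (z' - z))
          (ξ⁻¹ • ContinuousLinearMap.id ℝ (EuclideanSpace ℝ (Fin n))) z :=
        ((hasFDerivAt_id z).sub_const z).const_smul ξ⁻¹
      have h0 : ξ⁻¹ • (z - z) = (0:EuclideanSpace ℝ (Fin n)) := by rw [sub_self, smul_zero]
      have hΦf : HasFDerivAt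
          (fun w => ∫ ν in Metric.closedBall (0:EuclideanSpace ℝ (Fin n)) 1, h (ν + w) ∂volume)
          (InnerProductSpace.toDual ℝ (EuclideanSpace ℝ (Fin n)) G) (ξ⁻¹ • (z - z)) := by
        rw [h0]; exact hgr.hasFDerivAt
      have hcomp := hΦf.comp z hlin
      have hsmul := hcomp.const_smul (R := ℝ) vbR⁻¹
      have hgrad : HasGradientAt (fun z' => ∫ ν, g (z' + ξ • ν) ∂(ballUniform n))
          ((vbR⁻¹ * ξ⁻¹) • G) z := by
        rw [hasGradientAt_iff_hasFDerivAt]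
        have heqf : InnerProductSpace.toDual ℝ (EuclideanSpace ℝ (Fin n)) ((vbR⁻¹ * ξ⁻¹) • G)
            = vbR⁻¹ • ((InnerProductSpace.toDual ℝ (EuclideanSpace ℝ (Fin n)) G).comp
                (ξ⁻¹ • ContinuousLinearMap.id ℝ (EuclideanSpace ℝ (Fin n)))) := by
          apply ContinuousLinearMap.ext
          intro w
          simp only [InnerProductSpace.toDual_apply_apply, ContinuousLinearMap.smul_apply,
            ContinuousLinearMap.coe_comp', Function.comp_apply, ContinuousLinearMap.coe_id', id_eq]
          rw [real_inner_smul_left, real_inner_smul_right, smul_eq_mul]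
          ring
        rw [hF, heqf]
        exact hsmul
      refine ⟨hgrad, ?_⟩
      -- the RHS identity
      have hIntU : Integrable (fun u : Metric.sphere (0:EuclideanSpace ℝ (Fin n)) 1
          => (u:EuclideanSpace ℝ (Fin n))) τ := by
        refine (integrable_const 1).mono' continuous_subtype_val.aestronglyMeasurable ?_
        refine Filter.Eventually.of_forall fun u => ?_
        have : ‖(u:EuclideanSpace ℝ (Fin n))‖ = 1 := by
          simpa using mem_sphere_zero_iff_norm.1 u.2
        rw [this]
      have hgc : Continuous g := by
        have hlip : LipschitzWith (Real.toNNReal L) g := by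
          apply LipschitzWith.of_dist_le_mul
          intro a b
          rw [Real.dist_eq, Real.coe_toNNReal _ hL, dist_eq_norm]
          exact hg a b
        exact hlip.continuous
      have hIntG : Integrable (fun u : Metric.sphere (0:EuclideanSpace ℝ (Fin n)) 1 =>
          h (u:EuclideanSpace ℝ (Fin n)) • (u:EuclideanSpace ℝ (Fin n))) τ := by
        refine (integrable_const (|g z| + L*ξ)).mono' ?_ ?_
        · exact Continuous.aestronglyMeasurable (by simp only [hhdef]; fun_prop)
        · refine Filter.Eventually.of_forall fun u => ?_
          have hnu : ‖(u:EuclideanSpace ℝ (Fin n))‖ = 1 := by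
            simpa using mem_sphere_zero_iff_norm.1 u.2
          rw [norm_smul, hnu, mul_one, Real.norm_eq_abs]
          have h1 := hg (z + ξ • (u:EuclideanSpace ℝ (Fin n))) z
          have he : (z + ξ • (u:EuclideanSpace ℝ (Fin n))) - z
              = ξ • (u:EuclideanSpace ℝ (Fin n)) := by abel
          rw [he, norm_smul, Real.norm_eq_abs, abs_of_pos hξ, hnu, mul_one] at h1
          have h2 : |h (u:EuclideanSpace ℝ (Fin n))| - |g z|
              ≤ |h (u:EuclideanSpace ℝ (Fin n)) - g z| :=
            abs_sub_abs_le_abs_sub _ _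
          have h3 : |h (u:EuclideanSpace ℝ (Fin n)) - g z| ≤ L * ξ := h1
          linarith
      have hzero : (∫ u : Metric.sphere (0:EuclideanSpace ℝ (Fin n)) 1,
          (u:EuclideanSpace ℝ (Fin n)) ∂τ) = 0 := RS.integral_id_toSphere
      rw [sphereUniform, MeasureTheory.integral_smul_measure, ENNReal.toReal_inv]
      have hsplit : (∫ u : Metric.sphere (0:EuclideanSpace ℝ (Fin n)) 1,
          (g (z + ξ • (u:EuclideanSpace ℝ (Fin n))) - g z) • (u:EuclideanSpace ℝ (Fin n)) ∂τ)
          = G := by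
        have hpt : ∀ u : Metric.sphere (0:EuclideanSpace ℝ (Fin n)) 1,
            (g (z + ξ • (u:EuclideanSpace ℝ (Fin n))) - g z) • (u:EuclideanSpace ℝ (Fin n))
            = h (u:EuclideanSpace ℝ (Fin n)) • (u:EuclideanSpace ℝ (Fin n))
              - (g z) • (u:EuclideanSpace ℝ (Fin n)) := fun u => by
          rw [sub_smul]
        have hIntU2 : Integrable (fun u : Metric.sphere (0:EuclideanSpace ℝ (Fin n)) 1 =>
            (g z) • (u:EuclideanSpace ℝ (Fin n))) τ := hIntU.smul (g z)
        rw [integral_congr_ae (Filter.Eventually.of_forall hpt),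
          MeasureTheory.integral_sub hIntG hIntU2,
          MeasureTheory.integral_smul, hzero, smul_zero, sub_zero]
      rw [hsplit, smul_smul]
      congr 1
      have hT : (τ Set.univ).toReal = (n:ℝ) * vbR := by
        rw [hτ, Measure.toSphere_apply_univ, ENNReal.toReal_mul, hdim, hvbR]
        simp
      rw [hT]
      have hn0 : (n:ℝ) ≠ 0 := by exact_mod_cast hn.ne'
      field_simp
    exact ⟨fun z => (main z).1.differentiableAt, fun z => by
      rw [(main z).1.gradient, (main z).2]⟩
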